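/- Let K_4 be the complete graph on vertices {1,2,3,4}. Then in S = K[x_1,...,x_4,y_1,...,y_4] the Plücker-type relation f_{1,2} f_{3,4} - f_{1,3} f_{2,4} + f_{1,4} f_{2,3} = 0 holds, where f_{i,j} = x_i y_j - x_j y_i. Consequently, if K_4 is an induced subgraph of a graph G, then the binomial edge ideal J_G is not of linear type (its Rees algebra's defining ideal contains a quadratic relation in the T-variables not coming from the symmetric algebra). -/

import Mathlib

open MvPolynomial

noncomputable section

variable {n : ℕ}

/-- `f_{a,b} = x_a y_b - x_b y_a`. -/
def fpoly (K : Type*) [Field K] (a b : Fin n) : MvPolynomial (Fin n ⊕ Fin n) K :=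
  X (Sum.inl a) * X (Sum.inr b) - X (Sum.inl b) * X (Sum.inr a)

/-- The presentation map of the Rees algebra of the binomial edge ideal `J_G`:
`T_{(i,j)} ↦ f_{i,j}·t` for each (ordered) edge of `G`. -/
def reesMap (K : Type*) [Field K] (G : SimpleGraph (Fin n)) :
    MvPolynomial {e : Fin n × Fin n // G.Adj e.1 e.2} (MvPolynomial (Fin n ⊕ Fin n) K)
      →ₐ[MvPolynomial (Fin n ⊕ Fin n) K] Polynomial (MvPolynomial (Fin n ⊕ Fin n) K) :=
  MvPolynomial.aeval (fun e => Polynomial.C (fpoly K e.1.1 e.1.2) * Polynomial.X)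

/-- Auxiliary: the exponent of the monomial `x_a y_b`. -/
def pairMon (a b : Fin n) : (Fin n ⊕ Fin n) →₀ ℕ :=
  Finsupp.single (Sum.inl a) 1 + Finsupp.single (Sum.inr b) 1

lemma fpoly_eq (K : Type*) [Field K] (a b : Fin n) :
    fpoly K a b = monomial (pairMon a b) 1 - monomial (pairMon b a) 1 := by
  simp [fpoly, X, monomial_mul, pairMon]

lemma pairMon_le {a b i j : Fin n} : pairMon i j ≤ pairMon a b ↔ i = a ∧ j = b := by
  constructor
  · intro h
    have h1 := h (Sum.inl i)
    have h2 := h (Sum.inr j)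
    simp [pairMon, Finsupp.single_apply] at h1 h2
    constructor
    · by_contra hia
      simp [Ne.symm hia] at h1
    · by_contra hjb
      simp [Ne.symm hjb] at h2
  · rintro ⟨rfl, rfl⟩; exact le_rfl

lemma pairMon_eq {a b i j : Fin n} : pairMon i j = pairMon a b ↔ i = a ∧ j = b :=
  ⟨fun h => pairMon_le.mp h.le, by rintro ⟨rfl, rfl⟩; rfl⟩

lemma coeff_pair_mul {K : Type*} [Field K] (c : MvPolynomial (Fin n ⊕ Fin n) K)
    (i j a b : Fin n) :
    coeff (pairMon a b) (c * monomial (pairMon i j) (1 : K)) =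
      if i = a ∧ j = b then constantCoeff c else 0 := by
  rw [coeff_mul_monomial']
  by_cases h : i = a ∧ j = b
  · obtain ⟨rfl, rfl⟩ := h
    simp [constantCoeff_eq]
  · rw [if_neg (fun hle => h (pairMon_le.mp hle)), if_neg h]

lemma coeff_pair_fpoly {K : Type*} [Field K] (i j a b : Fin n) :
    coeff (pairMon a b) (fpoly K i j) =
      (if i = a ∧ j = b then (1:K) else 0) - (if j = a ∧ i = b then (1:K) else 0) := by
  rw [fpoly_eq, coeff_sub, coeff_monomial, coeff_monomial]
  congr 1 <;> simp only [pairMon_eq]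

lemma coeff_pair_mul_fpoly {K : Type*} [Field K] (c : MvPolynomial (Fin n ⊕ Fin n) K)
    (i j a b : Fin n) :
    coeff (pairMon a b) (c * fpoly K i j) =
      constantCoeff c * coeff (pairMon a b) (fpoly K i j) := by
  rw [coeff_pair_fpoly, fpoly_eq, mul_sub, coeff_sub, coeff_pair_mul, coeff_pair_mul]
  split_ifs <;> ring

/-- The linear functional `L = coeff(x_a y_b) + coeff(x_c y_d)`. -/
def Lfun (K : Type*) [Field K] (a b c d : Fin n) (s : MvPolynomial (Fin n ⊕ Fin n) K) : K :=
  coeff (pairMon a b) s + coeff (pairMon c d) s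

lemma Lfun_mul_fpoly {K : Type*} [Field K] (a b c d i j : Fin n)
    (s : MvPolynomial (Fin n ⊕ Fin n) K) :
    Lfun K a b c d (s * fpoly K i j) = constantCoeff s * Lfun K a b c d (fpoly K i j) := by
  simp [Lfun, coeff_pair_mul_fpoly, mul_add]

/-- The separating character `Ψ`. -/
def psiHom (K : Type*) [Field K] (G : SimpleGraph (Fin n)) (a b c d : Fin n) :
    MvPolynomial {e : Fin n × Fin n // G.Adj e.1 e.2} (MvPolynomial (Fin n ⊕ Fin n) K) →+* K :=
  eval₂Hom constantCoeff (fun e => Lfun K a b c d (fpoly K e.1.1 e.1.2))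

lemma degree_one_single {α : Type*} [DecidableEq α] (m : α →₀ ℕ) (h : Finsupp.degree m = 1) :
    ∃ e, m = Finsupp.single e 1 := by
  have hne : m.support.Nonempty := by
    by_contra hc
    rw [Finset.not_nonempty_iff_eq_empty] at hc
    rw [Finsupp.degree_apply, hc] at h
    simp at h
  obtain ⟨e, he⟩ := hne
  refine ⟨e, Finsupp.eq_single_iff.mpr ⟨?_, ?_⟩⟩
  · intro x hx
    by_contra hxe
    have hxe' : x ≠ e := by simpa using hxe
    have h1 : 1 ≤ m x := Nat.one_le_iff_ne_zero.mpr (Finsupp.mem_support_iff.mp hx)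
    have h2 : 1 ≤ m e := Nat.one_le_iff_ne_zero.mpr (Finsupp.mem_support_iff.mp he)
    have : 2 ≤ Finsupp.degree m := by
      rw [Finsupp.degree]
      calc 2 = 1 + 1 := rfl
        _ ≤ m x + m e := Nat.add_le_add h1 h2
        _ ≤ ∑ i ∈ m.support, m i := by
            rw [← Finset.sum_pair hxe']
            exact Finset.sum_le_sum_of_subset (by
              intro y hy
              simp only [Finset.mem_insert, Finset.mem_singleton] at hy
              rcases hy with rfl | rfl <;> assumption)
    omega
  · have h1 : 1 ≤ m e := Nat.one_le_iff_ne_zero.mpr (Finsupp.mem_support_iff.mp he)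
    have h2 : m e ≤ Finsupp.degree m := by
      rw [Finsupp.degree]
      exact Finset.single_le_sum (fun _ _ => Nat.zero_le _) he
    omega

lemma psi_ker {K : Type*} [Field K] {G : SimpleGraph (Fin n)} (a b c d : Fin n)
    (q : MvPolynomial {e : Fin n × Fin n // G.Adj e.1 e.2} (MvPolynomial (Fin n ⊕ Fin n) K))
    (hker : reesMap K G q = 0) (hq : q.IsHomogeneous 1) :
    psiHom K G a b c d q = 0 := by
  have hq' : q = ∑ m ∈ q.support, monomial m (coeff m q) := (support_sum_monomial_coeff q).symm
  have step : ∀ m ∈ q.support,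
      psiHom K G a b c d (monomial m (coeff m q)) =
        Lfun K a b c d ((reesMap K G (monomial m (coeff m q))).coeff 1) := by
    intro m hm
    have hdeg : Finsupp.degree m = 1 := by
      rw [Finsupp.degree_eq_weight_one]
      exact hq (mem_support_iff.mp hm)
    obtain ⟨e, he⟩ := degree_one_single m hdeg
    set s := coeff m q with hs
    rw [he]
    have hL : psiHom K G a b c d (monomial (Finsupp.single e 1) s) =
        constantCoeff s * Lfun K a b c d (fpoly K e.1.1 e.1.2) := by
      rw [psiHom, eval₂Hom_monomial]
      simp [Finsupp.prod_single_index]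
    have hR : reesMap K G (monomial (Finsupp.single e 1) s) =
        Polynomial.C (s * fpoly K e.1.1 e.1.2) * Polynomial.X := by
      rw [reesMap, aeval_monomial, Polynomial.algebraMap_eq, map_mul]
      rw [Finsupp.prod_single_index (by simp), pow_one]
      ring
    rw [hL, hR]
    simp [Polynomial.coeff_C_mul, Lfun_mul_fpoly]
  have hΨ : psiHom K G a b c d q =
      ∑ m ∈ q.support, Lfun K a b c d ((reesMap K G (monomial m (coeff m q))).coeff 1) := by
    conv_lhs => rw [hq']
    rw [map_sum]
    exact Finset.sum_congr rfl step
  rw [hΨ]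
  have : ∑ m ∈ q.support, Lfun K a b c d ((reesMap K G (monomial m (coeff m q))).coeff 1)
      = Lfun K a b c d ((reesMap K G q).coeff 1) := by
    conv_rhs => rw [hq']
    rw [map_sum, Polynomial.finset_sum_coeff]
    simp only [Lfun, MvPolynomial.coeff_sum]
    rw [Finset.sum_add_distrib]
  rw [this, hker]
  simp [Lfun]

theorem k4_pluecker_and_not_linear_type
    (K : Type*) [Field K] :
    (fpoly (n := 4) K 0 1 * fpoly K 2 3 - fpoly K 0 2 * fpoly K 1 3 +
      fpoly K 0 3 * fpoly K 1 2 = 0) ∧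
    ∀ (G : SimpleGraph (Fin n)) (a b c d : Fin n),
      G.Adj a b → G.Adj a c → G.Adj a d → G.Adj b c → G.Adj b d → G.Adj c d →
      Ideal.span {p | p ∈ RingHom.ker (reesMap K G) ∧ p.IsHomogeneous 1} ≠
        RingHom.ker (reesMap K G) := by
  have pluecker : ∀ (m : ℕ) (a b c d : Fin m),
      fpoly K a b * fpoly K c d - fpoly K a c * fpoly K b d +
        fpoly K a d * fpoly K b c = 0 := by
    intro m a b c d
    simp only [fpoly]
    ring
  constructor
  · exact pluecker 4 0 1 2 3
  · intro G a b c d hab hac had hbc hbd hcd heq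
    -- the Plücker quadric
    set P : MvPolynomial {e : Fin n × Fin n // G.Adj e.1 e.2}
        (MvPolynomial (Fin n ⊕ Fin n) K) :=
      X ⟨(a, b), hab⟩ * X ⟨(c, d), hcd⟩ - X ⟨(a, c), hac⟩ * X ⟨(b, d), hbd⟩ +
        X ⟨(a, d), had⟩ * X ⟨(b, c), hbc⟩ with hP
    have hPker : reesMap K G P = 0 := by
      rw [hP]
      simp only [map_add, map_sub, map_mul, reesMap, aeval_X]
      have := pluecker n a b c d
      calc (Polynomial.C (fpoly K a b) * Polynomial.X) * (Polynomial.C (fpoly K c d) * Polynomial.X)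
            - (Polynomial.C (fpoly K a c) * Polynomial.X) * (Polynomial.C (fpoly K b d) * Polynomial.X)
            + (Polynomial.C (fpoly K a d) * Polynomial.X) * (Polynomial.C (fpoly K b c) * Polynomial.X)
          = Polynomial.C (fpoly K a b * fpoly K c d - fpoly K a c * fpoly K b d +
              fpoly K a d * fpoly K b c) * Polynomial.X ^ 2 := by
            simp only [map_add, map_sub, map_mul]; ring
        _ = 0 := by rw [this]; simp
    have hPmem : P ∈ RingHom.ker (reesMap K G) := by
      rw [RingHom.mem_ker]; exact hPker
    have hPspan : P ∈ Ideal.span {p | p ∈ RingHom.ker (reesMap K G) ∧ p.IsHomogeneous 1} := by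
      rw [heq]; exact hPmem
    -- Ψ kills the span
    have hΨ0 : psiHom K G a b c d P = 0 := by
      refine Submodule.span_induction (p := fun x _ => psiHom K G a b c d x = 0) ?_ ?_ ?_ ?_ hPspan
      · intro x hx
        exact psi_ker a b c d x (RingHom.mem_ker.mp hx.1) hx.2
      · simp
      · intro x y _ _ hx hy; rw [map_add, hx, hy, add_zero]
      · intro r x _ hx; rw [smul_eq_mul, map_mul, hx, mul_zero]
    -- But Ψ P = 1
    have hne : a ≠ b := hab.ne
    have hne2 : a ≠ c := hac.ne
    have hne3 : a ≠ d := had.ne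
    have hne4 : b ≠ c := hbc.ne
    have hne5 : b ≠ d := hbd.ne
    have hne6 : c ≠ d := hcd.ne
    have hΨ1 : psiHom K G a b c d P = 1 := by
      rw [hP]
      simp only [map_add, map_sub, map_mul, psiHom, eval₂Hom_X']
      simp only [Lfun, coeff_pair_fpoly]
      simp [hne, hne2, hne3, hne4, hne5, hne6, Ne.symm hne, Ne.symm hne2, Ne.symm hne3,
        Ne.symm hne4, Ne.symm hne5, Ne.symm hne6]
    rw [hΨ0] at hΨ1
    exact zero_ne_one hΨ1
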